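/- Let N ≥ 1, let F be a nonzero polynomial in N complex variables with complex coefficients and total degree deg F, and let B_1,…,B_N be finite sets of integers with |B_i| ≥ 2·deg F for every i. Then the number of tuples (x_1,…,x_N) ∈ B_1 × ⋯ × B_N with F(x_1,…,x_N) ≠ 0 is at least 2^{−N} · ∏_{i=1}^N |B_i|. -/

import Mathlib

open scoped Classical

noncomputable section

open MvPolynomial Finset

noncomputable section

lemma key_count : ∀ (n : ℕ) (F : MvPolynomial (Fin n) ℂ), F ≠ 0 → ∀ B : Fin n → Finset ℤ,
    ∏ i, ((B i).card - F.degreeOf i) ≤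
      ((Fintype.piFinset B).filter
        (fun x => MvPolynomial.eval (fun i => ((x i : ℤ) : ℂ)) F ≠ 0)).card := by
  intro n
  induction n with
  | zero =>
    intro F hF B
    simp only [Finset.univ_eq_empty, Finset.prod_empty]
    have h1 : ∀ x : Fin 0 → ℤ, MvPolynomial.eval (fun i => ((x i : ℤ) : ℂ)) F ≠ 0 := by
      intro x h
      apply hF
      rw [MvPolynomial.eq_C_of_isEmpty F]
      rw [MvPolynomial.eq_C_of_isEmpty F, MvPolynomial.eval_C] at h
      rw [h, map_zero]
    rw [Finset.filter_true_of_mem (fun x _ => h1 x)]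
    simp [Fintype.card_piFinset]
  | succ n ih =>
    intro F hF B
    set q := MvPolynomial.finSuccEquiv ℂ n F with hq
    have hq0 : q ≠ 0 := fun h =>
      hF ((MvPolynomial.finSuccEquiv ℂ n).injective (by simpa [hq] using h))
    set d := q.natDegree with hd
    set G := q.leadingCoeff with hG
    have hG0 : G ≠ 0 := Polynomial.leadingCoeff_ne_zero.2 hq0
    have IH := ih G hG0 (fun i => B i.succ)
    -- good tails
    set T := (Fintype.piFinset (fun i => B i.succ)).filter
        (fun y => MvPolynomial.eval (fun i => ((y i : ℤ) : ℂ)) G ≠ 0) with hT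
    -- for each good tail, many good heads
    have hhead : ∀ y ∈ T, (B 0).card - d ≤
        ((B 0).filter (fun a => MvPolynomial.eval
          (fun i => (((Fin.cons a y : Fin (n+1) → ℤ) i : ℤ) : ℂ)) F ≠ 0)).card := by
      intro y hy
      rw [hT, Finset.mem_filter] at hy
      set p := q.map (MvPolynomial.eval (fun i => ((y i : ℤ) : ℂ))) with hp
      have hlead : p.coeff d ≠ 0 := by
        rw [hp, Polynomial.coeff_map]
        exact hy.2
      have hp0 : p ≠ 0 := fun h => hlead (by simp [h])
      have hdeg : p.natDegree ≤ d := Polynomial.natDegree_map_le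
      have hroots : (p.roots.toFinset.card) ≤ d :=
        le_trans (Multiset.toFinset_card_le _) (le_trans (Polynomial.card_roots' p) hdeg)
      have hcard : ((B 0).filter (fun a => ¬ MvPolynomial.eval
          (fun i => (((Fin.cons a y : Fin (n+1) → ℤ) i : ℤ) : ℂ)) F ≠ 0)).card ≤ d := by
        refine le_trans (Finset.card_le_card_of_injOn (fun a : ℤ => (a : ℂ)) ?_ ?_) hroots
        · intro a ha
          rw [Finset.mem_coe, Finset.mem_filter, not_not] at ha
          rw [Finset.mem_coe, Multiset.mem_toFinset, Polynomial.mem_roots hp0]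
          have h2 := ha.2
          rw [show (fun i => (((Fin.cons a y : Fin (n+1) → ℤ) i : ℤ) : ℂ)) =
              Fin.cons ((a : ℤ) : ℂ) (fun i => ((y i : ℤ) : ℂ)) from ?_] at h2
          · rw [MvPolynomial.eval_eq_eval_mv_eval'] at h2
            exact h2
          · funext i
            refine Fin.cases ?_ ?_ i <;> simp
        · exact fun a _ b _ h => Int.cast_injective (α := ℂ) h
      have := Finset.card_filter_add_card_filter_not
        (s := B 0) (p := fun a => MvPolynomial.eval
          (fun i => (((Fin.cons a y : Fin (n+1) → ℤ) i : ℤ) : ℂ)) F ≠ 0)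
      omega
    -- assemble
    set S := T.biUnion (fun y => ((B 0).filter (fun a => MvPolynomial.eval
        (fun i => (((Fin.cons a y : Fin (n+1) → ℤ) i : ℤ) : ℂ)) F ≠ 0)).image
        (fun a => (Fin.cons a y : Fin (n+1) → ℤ))) with hS
    have hconsinj : ∀ y : Fin n → ℤ, Function.Injective
        (fun a : ℤ => (Fin.cons a y : Fin (n+1) → ℤ)) := by
      intro y a b h
      have := congrFun h 0
      simpa using this
    have hdisj : ∀ y₁ ∈ T, ∀ y₂ ∈ T, y₁ ≠ y₂ → Disjoint
        (((B 0).filter (fun a => MvPolynomial.eval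
          (fun i => (((Fin.cons a y₁ : Fin (n+1) → ℤ) i : ℤ) : ℂ)) F ≠ 0)).image
          (fun a => (Fin.cons a y₁ : Fin (n+1) → ℤ)))
        (((B 0).filter (fun a => MvPolynomial.eval
          (fun i => (((Fin.cons a y₂ : Fin (n+1) → ℤ) i : ℤ) : ℂ)) F ≠ 0)).image
          (fun a => (Fin.cons a y₂ : Fin (n+1) → ℤ))) := by
      intro y₁ _ y₂ _ hne
      rw [Finset.disjoint_left]
      rintro x hx₁ hx₂
      rw [Finset.mem_image] at hx₁ hx₂
      obtain ⟨a₁, _, rfl⟩ := hx₁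
      obtain ⟨a₂, _, h₂⟩ := hx₂
      apply hne
      have := congrArg Fin.tail h₂.symm
      simpa [Fin.tail_cons] using this
    have hScard : ((B 0).card - d) * T.card ≤ S.card := by
      rw [hS, Finset.card_biUnion hdisj]
      calc ((B 0).card - d) * T.card = ∑ _y ∈ T, ((B 0).card - d) := by
            rw [Finset.sum_const, smul_eq_mul, mul_comm]
        _ ≤ _ := by
            refine Finset.sum_le_sum (fun y hy => ?_)
            rw [Finset.card_image_of_injective _ (hconsinj y)]
            exact hhead y hy
    have hSsub : S ⊆ (Fintype.piFinset B).filter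
        (fun x => MvPolynomial.eval (fun i => ((x i : ℤ) : ℂ)) F ≠ 0) := by
      intro x hx
      rw [hS, Finset.mem_biUnion] at hx
      obtain ⟨y, hy, hx⟩ := hx
      rw [Finset.mem_image] at hx
      obtain ⟨a, ha, rfl⟩ := hx
      rw [Finset.mem_filter] at ha
      rw [hT, Finset.mem_filter] at hy
      rw [Finset.mem_filter]
      refine ⟨?_, ha.2⟩
      rw [Fintype.mem_piFinset]
      intro i
      refine Fin.cases ?_ ?_ i
      · simpa using ha.1
      · intro j
        simpa using (Fintype.mem_piFinset.1 hy.1) j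
    -- degree comparisons
    have hd0 : F.degreeOf 0 = d := (MvPolynomial.natDegree_finSuccEquiv F).symm
    have hGi : ∀ i : Fin n, G.degreeOf i ≤ F.degreeOf i.succ := by
      intro i
      have : G = q.coeff d := rfl
      rw [this]
      exact MvPolynomial.degreeOf_coeff_finSuccEquiv F i d
    calc ∏ i, ((B i).card - F.degreeOf i)
        = ((B 0).card - F.degreeOf 0) * ∏ i : Fin n, ((B i.succ).card - F.degreeOf i.succ) :=
          Fin.prod_univ_succ _
      _ ≤ ((B 0).card - d) * ∏ i : Fin n, ((B i.succ).card - G.degreeOf i) := by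
          rw [hd0]
          exact Nat.mul_le_mul_left _ (Finset.prod_le_prod' fun i _ =>
            Nat.sub_le_sub_left (hGi i) _)
      _ ≤ ((B 0).card - d) * T.card := Nat.mul_le_mul_left _ IH
      _ ≤ S.card := hScard
      _ ≤ _ := Finset.card_le_card hSsub

/-- **Lattice points avoiding a hypersurface** (Lemma 3.6): let `F` be a nonzero polynomial
in `N` complex variables and `B_1,…,B_N` finite sets of integers with `|B_i| ≥ 2·deg F` for
every `i`. Then the number of tuples `(x_1,…,x_N) ∈ B_1 × ⋯ × B_N` with
`F(x_1,…,x_N) ≠ 0` is at least `2^{−N} · ∏_i |B_i|`. -/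
theorem count_tuples_avoiding_hypersurface (N : ℕ) (hN : 1 ≤ N)
    (F : MvPolynomial (Fin N) ℂ) (hF : F ≠ 0) (B : Fin N → Finset ℤ)
    (hB : ∀ i, 2 * F.totalDegree ≤ (B i).card) :
    ((2 : ℝ) ^ N)⁻¹ * ∏ i, ((B i).card : ℝ) ≤
      ((({x : Fin N → ℤ | (∀ i, x i ∈ B i) ∧
          MvPolynomial.eval (fun i => ((x i : ℤ) : ℂ)) F ≠ 0}).ncard : ℕ) : ℝ) := by
  have hset : {x : Fin N → ℤ | (∀ i, x i ∈ B i) ∧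
      MvPolynomial.eval (fun i => ((x i : ℤ) : ℂ)) F ≠ 0} =
      ↑((Fintype.piFinset B).filter
        (fun x => MvPolynomial.eval (fun i => ((x i : ℤ) : ℂ)) F ≠ 0)) := by
    ext x
    simp [Fintype.mem_piFinset]
  rw [hset, Set.ncard_coe_finset]
  have hkey := key_count N F hF B
  have hcast : ((∏ i, ((B i).card - F.degreeOf i) : ℕ) : ℝ) ≤
      (((Fintype.piFinset B).filter
        (fun x => MvPolynomial.eval (fun i => ((x i : ℤ) : ℂ)) F ≠ 0)).card : ℝ) := by
    exact_mod_cast hkey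
  refine le_trans ?_ hcast
  rw [Nat.cast_prod]
  have hrw : ((2 : ℝ) ^ N)⁻¹ * ∏ i, ((B i).card : ℝ) =
      ∏ i, (((B i).card : ℝ) / 2) := by
    rw [Finset.prod_div_distrib, Finset.prod_const, Finset.card_univ, Fintype.card_fin,
      div_eq_inv_mul]
  rw [hrw]
  refine Finset.prod_le_prod (fun i _ => by positivity) (fun i _ => ?_)
  have h1 : F.degreeOf i ≤ F.totalDegree := MvPolynomial.degreeOf_le_totalDegree F i
  have h2 := hB i
  have h4 : 2 * F.degreeOf i ≤ (B i).card := le_trans (Nat.mul_le_mul_left 2 h1) h2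
  have h3 : F.degreeOf i ≤ (B i).card := le_trans (Nat.le_mul_of_pos_left _ Nat.zero_lt_two) h4
  rw [Nat.cast_sub h3]
  have h5 : (2 * F.degreeOf i : ℝ) ≤ ((B i).card : ℝ) := by exact_mod_cast h4
  push_cast at h5 ⊢
  linarith
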